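/- Let g : ℝ → ℝ be three times differentiable and satisfy g'''(t) − 3g'(t)g''(t) + g'(t) + (g'(t))³ = 0 for all t. Define h(r,t) = (r²/2)·(e^{2g(t)} − 1/4 + g''(t)/2 − (g'(t))²/4), U(r,t) = −(r/2)·g'(t), and V(r,t) = r·(e^{g(t)} − 1/2). Then for all r > 0 and all t ∈ ℝ the triple (h, U, V) satisfies the radially symmetric rotating shallow water system: ∂ₜh + ∂ᵣ(hU) + hU/r = 0, ∂ₜU + U·∂ᵣU + ∂ᵣh − V − V²/r = 0, and ∂ₜV + U·∂ᵣV + U + V·U/r = 0, where ∂ₜ denotes the derivative of the function t ↦ (·)(r,t) and ∂ᵣ the derivative of the function r ↦ (·)(r,t). -/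

import Mathlib

/-- If `g` is three times differentiable with `g''' - 3g'g'' + g' + (g')³ = 0`, then the
separated-variable triple `h(r,t) = (r²/2)(e^{2g} - 1/4 + g''/2 - (g')²/4)`,
`U(r,t) = -(r/2)g'`, `V(r,t) = r(e^{g} - 1/2)` solves the radially symmetric rotating
shallow water system for all `r > 0` and `t ∈ ℝ`. -/
theorem stmt_19 (g g' g'' g''' : ℝ → ℝ)
    (hg : ∀ t : ℝ, HasDerivAt g (g' t) t)
    (hg' : ∀ t : ℝ, HasDerivAt g' (g'' t) t)
    (hg'' : ∀ t : ℝ, HasDerivAt g'' (g''' t) t)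
    (hode : ∀ t : ℝ, g''' t - 3 * g' t * g'' t + g' t + (g' t) ^ 3 = 0)
    (h U V : ℝ → ℝ → ℝ)
    (hh : ∀ r t : ℝ, h r t =
      r ^ 2 / 2 * (Real.exp (2 * g t) - 1 / 4 + g'' t / 2 - (g' t) ^ 2 / 4))
    (hU : ∀ r t : ℝ, U r t = -(r / 2) * g' t)
    (hV : ∀ r t : ℝ, V r t = r * (Real.exp (g t) - 1 / 2)) :
    ∀ r : ℝ, 0 < r → ∀ t : ℝ,
      deriv (fun s => h r s) t + deriv (fun ρ => h ρ t * U ρ t) r +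
          h r t * U r t / r = 0 ∧
      deriv (fun s => U r s) t + U r t * deriv (fun ρ => U ρ t) r +
          deriv (fun ρ => h ρ t) r - V r t - (V r t) ^ 2 / r = 0 ∧
      deriv (fun s => V r s) t + U r t * deriv (fun ρ => V ρ t) r +
          U r t + V r t * U r t / r = 0 := by
  intro r hr t
  have hrne : r ≠ 0 := ne_of_gt hr
  set C : ℝ := Real.exp (2 * g t) - 1 / 4 + g'' t / 2 - (g' t) ^ 2 / 4 with hC
  have e1 : (fun s => h r s) = fun s =>
      r ^ 2 / 2 * (Real.exp (2 * g s) - 1 / 4 + g'' s / 2 - (g' s) ^ 2 / 4) :=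
    funext fun s => hh r s
  have e2 : (fun ρ => h ρ t * U ρ t) = fun ρ => (ρ ^ 2 / 2 * C) * (-(ρ / 2) * g' t) :=
    funext fun ρ => by rw [hh, hU]
  have e3 : (fun s => U r s) = fun s => -(r / 2) * g' s := funext fun s => hU r s
  have e4 : (fun ρ => U ρ t) = fun ρ => -(ρ / 2) * g' t := funext fun ρ => hU ρ t
  have e5 : (fun ρ => h ρ t) = fun ρ => ρ ^ 2 / 2 * C := funext fun ρ => hh ρ t
  have e6 : (fun s => V r s) = fun s => r * (Real.exp (g s) - 1 / 2) :=
    funext fun s => hV r s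
  have e7 : (fun ρ => V ρ t) = fun ρ => ρ * (Real.exp (g t) - 1 / 2) :=
    funext fun ρ => hV ρ t
  have d1 : HasDerivAt (fun s =>
      r ^ 2 / 2 * (Real.exp (2 * g s) - 1 / 4 + g'' s / 2 - (g' s) ^ 2 / 4))
      (r ^ 2 / 2 * ((Real.exp (2 * g t) * (2 * g' t) + g''' t / 2) -
        (2 : ℕ) * g' t ^ 1 * g'' t / 4)) t :=
    (((((hg t).const_mul 2).exp.sub_const (1 / 4)).add ((hg'' t).div_const 2)).sub
      (((hg' t).pow 2).div_const 4)).const_mul (r ^ 2 / 2)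
  have d2 : HasDerivAt (fun ρ => (ρ ^ 2 / 2 * C) * (-(ρ / 2) * g' t))
      (((2 : ℕ) * r ^ 1 / 2 * C) * (-(r / 2) * g' t) +
        (r ^ 2 / 2 * C) * (-(1 / 2) * g' t)) r := by
    have := (((hasDerivAt_pow 2 r).div_const 2).mul_const C).mul
      ((((hasDerivAt_id r).div_const 2).neg).mul_const (g' t))
    exact this.congr_deriv (by norm_num [Pi.neg_apply])
  have d3 : HasDerivAt (fun s => -(r / 2) * g' s) (-(r / 2) * g'' t) t :=
    (hg' t).const_mul (-(r / 2))
  have d4 : HasDerivAt (fun ρ => -(ρ / 2) * g' t) (-(1 / 2) * g' t) r := by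
    have := (((hasDerivAt_id r).div_const 2).neg).mul_const (g' t)
    exact this
  have d5 : HasDerivAt (fun ρ => ρ ^ 2 / 2 * C) ((2 : ℕ) * r ^ 1 / 2 * C) r :=
    ((hasDerivAt_pow 2 r).div_const 2).mul_const C
  have d6 : HasDerivAt (fun s => r * (Real.exp (g s) - 1 / 2))
      (r * (Real.exp (g t) * g' t)) t :=
    ((hg t).exp.sub_const (1 / 2)).const_mul r
  have d7 : HasDerivAt (fun ρ => ρ * (Real.exp (g t) - 1 / 2))
      (1 * (Real.exp (g t) - 1 / 2)) r :=
    (hasDerivAt_id r).mul_const _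
  rw [hh, hU, hV, e1, e2, e3, e4, e5, e6, e7, d1.deriv, d2.deriv, d3.deriv, d4.deriv,
    d5.deriv, d6.deriv, d7.deriv]
  have hE : Real.exp (2 * g t) = Real.exp (g t) ^ 2 := by
    rw [two_mul, Real.exp_add]; ring
  have hode1 := hode t
  have hdiv1 : r ^ 2 / 2 * C * (-(r / 2) * g' t) / r = r / 2 * C * (-(r / 2) * g' t) := by
    field_simp
  have hdiv2 : (r * (Real.exp (g t) - 1 / 2)) ^ 2 / r = r * (Real.exp (g t) - 1 / 2) ^ 2 := by
    field_simp
  have hdiv3 : r * (Real.exp (g t) - 1 / 2) * (-(r / 2) * g' t) / r =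
      (Real.exp (g t) - 1 / 2) * (-(r / 2) * g' t) := by
    field_simp
  refine ⟨?_, ?_, ?_⟩
  · rw [hdiv1, hC, hE]
    linear_combination (r ^ 2 / 4) * hode1
  · rw [hdiv2, hC, hE]
    ring
  · rw [hdiv3]
    ring
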